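/- Identify F₃ = {−1,0,1} and let E = F₃ × F₃; let A_i = {(x,i) : x ∈ F₃} and B_j = {(j,y) : y ∈ F₃}. Let f be the rank function of the tic-tac-toe matroid on E. Then for z ∉ E there is no polymatroid g on E ∪ {z} extending f such that g({z} ∪ A_{−1}) = g(A_{−1}), g({z} ∪ A_1) = g(A_1), and g(A_{−1} ∪ {z}) + g(A_1 ∪ {z}) = g(A_{−1} ∪ A_1 ∪ {z}) + g({z}). That is, the tic-tac-toe matroid admits no single-element CI extension for the pair (A_{−1}, A_1), so it does not satisfy the common information property. -/
import Mathlib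

open Finset

/-- A polymatroid on a finite ground set `E`. -/
def IsPolymatroid {α : Type*} [DecidableEq α] (E : Finset α) (f : Finset α → ℝ) : Prop :=
  f ∅ = 0 ∧
  (∀ ⦃X Y : Finset α⦄, X ⊆ Y → Y ⊆ E → f X ≤ f Y) ∧
  (∀ ⦃X Y : Finset α⦄, X ⊆ E → Y ⊆ E → f (X ∪ Y) + f (X ∩ Y) ≤ f X + f Y)

/-- The points of the affine plane over `F₃`. -/
abbrev Pt := ZMod 3 × ZMod 3

/-- The horizontal line `A_i = {(x, i) : x ∈ F₃}`. -/
def lineA (i : ZMod 3) : Finset Pt := Finset.univ.image (fun x => (x, i))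

/-- The vertical line `B_j = {(j, y) : y ∈ F₃}`. -/
def lineB (j : ZMod 3) : Finset Pt := Finset.univ.image (fun y => (j, y))

/-- The circuit-hyperplanes of the tic-tac-toe matroid:
the sets `A_i ∪ B_j` with `(i, j) ≠ (0, 0)`. -/
def tttCH : Finset (Finset Pt) :=
  (Finset.univ.filter (fun p : ZMod 3 × ZMod 3 => p ≠ (0, 0))).image
    (fun p => lineA p.1 ∪ lineB p.2)

/-- The rank function of the tic-tac-toe matroid (a sparse paving matroid of rank 5):
`f(X) = |X|` if `|X| ≤ 4`, `f(X) = 4` if `X` is a circuit-hyperplane, and `f(X) = 5`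
otherwise when `|X| ≥ 5`. -/
noncomputable def tttRank (X : Finset Pt) : ℝ :=
  if X ∈ tttCH then 4 else min X.card 5

lemma rank_of_card {X : Finset Pt} (h : X ∉ tttCH) {n : ℕ} (hc : X.card = n) (hn : n ≤ 5) :
    tttRank X = n := by
  rw [tttRank, if_neg h, hc, min_eq_left (by exact_mod_cast hn : (n : ℝ) ≤ 5)]

lemma rank_of_big {X : Finset Pt} (h : X ∉ tttCH) (hc : 5 ≤ X.card) : tttRank X = 5 := by
  rw [tttRank, if_neg h, min_eq_right (by exact_mod_cast hc : (5 : ℝ) ≤ (X.card : ℝ))]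

lemma rank_of_CH {X : Finset Pt} (h : X ∈ tttCH) : tttRank X = 4 := if_pos h

lemma CH_card {X : Finset Pt} (h : X ∈ tttCH) : X.card = 5 := by
  simp only [tttCH, Finset.mem_image, Finset.mem_filter] at h
  obtain ⟨p, -, rfl⟩ := h
  revert p; decide

lemma CH_mem (i j : ZMod 3) (h : (i, j) ≠ ((0 : ZMod 3), (0 : ZMod 3))) :
    lineA i ∪ lineB j ∈ tttCH := by
  simp only [tttCH, Finset.mem_image, Finset.mem_filter, Finset.mem_univ, true_and]
  exact ⟨(i, j), h, rfl⟩

/-- The tic-tac-toe matroid admits no single-element CI extension for the pair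
`(A₋₁, A₁)`, hence it does not satisfy the common information property. -/
theorem stmt_11 :
    ∀ z : Option Pt, z ∉ (Finset.univ.image some : Finset (Option Pt)) →
      ¬ ∃ g : Finset (Option Pt) → ℝ,
        IsPolymatroid ((Finset.univ.image some : Finset (Option Pt)) ∪ {z}) g ∧
        (∀ X : Finset Pt, g (X.image some) = tttRank X) ∧
        g ({z} ∪ (lineA (-1)).image some) = g ((lineA (-1)).image some) ∧
        g ({z} ∪ (lineA 1).image some) = g ((lineA 1).image some) ∧
        g ((lineA (-1)).image some ∪ {z}) + g ((lineA 1).image some ∪ {z}) =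
          g ((lineA (-1)).image some ∪ (lineA 1).image some ∪ {z}) + g {z} := by
  intro z hz
  rintro ⟨g, ⟨g0, gmono, gsub⟩, gext, hA1, hA2, hmod⟩
  obtain rfl : z = none := by
    cases z with
    | none => rfl
    | some p => exact absurd (Finset.mem_image_of_mem some (Finset.mem_univ p)) hz
  have huniv : (Finset.univ.image some ∪ {none} : Finset (Option Pt)) = Finset.univ := by
    ext x; cases x <;> simp
  have mono : ∀ {X Y : Finset (Option Pt)}, X ⊆ Y → g X ≤ g Y :=
    fun h => gmono h (by rw [huniv]; exact Finset.subset_univ _)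
  have sub : ∀ X Y : Finset (Option Pt), g (X ∪ Y) + g (X ∩ Y) ≤ g X + g Y :=
    fun X Y => gsub (by rw [huniv]; exact Finset.subset_univ _)
      (by rw [huniv]; exact Finset.subset_univ _)
  -- set identities
  have hid1 : ∀ S T : Finset Pt, S ⊆ T →
      T.image some ∪ ({none} ∪ S.image some) = {none} ∪ T.image some := by
    intro S T h
    rw [Finset.union_left_comm, Finset.union_eq_left.mpr (Finset.image_subset_image h)]
  have hid2 : ∀ S T : Finset Pt, S ⊆ T →
      T.image some ∩ ({none} ∪ S.image some) = S.image some := by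
    intro S T h
    ext x
    cases x with
    | none => simp
    | some a =>
      simp only [Finset.mem_inter, Finset.mem_union, Finset.mem_image, Finset.mem_singleton,
        Option.some.injEq, reduceCtorEq, false_or]
      constructor
      · rintro ⟨-, a, ha, rfl⟩; exact ⟨a, ha, rfl⟩
      · rintro ⟨a, ha, rfl⟩; exact ⟨⟨a, h ha, rfl⟩, ⟨a, ha, rfl⟩⟩
  have hid3 : ∀ S T : Finset Pt,
      ({none} ∪ S.image some) ∪ ({none} ∪ T.image some) = {none} ∪ (S ∪ T).image some := by
    intro S T
    rw [Finset.union_union_union_comm, Finset.union_self, Finset.image_union]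
  have hid4 : ∀ S T : Finset Pt,
      ({none} ∪ S.image some) ∩ ({none} ∪ T.image some) = {none} ∪ (S ∩ T).image some := by
    intro S T
    rw [← Finset.union_inter_distrib_left, ← Finset.image_inter _ _ (Option.some_injective _)]
  -- engine lemmas
  have hstep : ∀ S T : Finset Pt, S ⊆ T → g ({none} ∪ S.image some) = g (S.image some) →
      g ({none} ∪ T.image some) = g (T.image some) := by
    intro S T h hS
    refine le_antisymm ?_ (mono Finset.subset_union_right)
    have h1 := sub (T.image some) ({none} ∪ S.image some)
    rw [hid1 S T h, hid2 S T h, hS] at h1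
    linarith
  have hpair : ∀ S T : Finset Pt,
      tttRank (S ∪ T) + g ({none} ∪ (S ∩ T).image some) ≤
        g ({none} ∪ S.image some) + g ({none} ∪ T.image some) := by
    intro S T
    have h1 := sub ({none} ∪ S.image some) ({none} ∪ T.image some)
    rw [hid3 S T, hid4 S T] at h1
    have h2 : g ((S ∪ T).image some) ≤ g ({none} ∪ (S ∪ T).image some) :=
      mono Finset.subset_union_right
    rw [gext] at h2
    linarith
  -- basic values
  have e1 : g ({none} ∪ (lineA (-1)).image some) = 3 := by
    rw [hA1, gext, rank_of_card (by decide) (by decide : (lineA (-1)).card = 3) (by norm_num)]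
    norm_num
  have e2 : g ({none} ∪ (lineA 1).image some) = 3 := by
    rw [hA2, gext, rank_of_card (by decide) (by decide : (lineA 1).card = 3) (by norm_num)]
    norm_num
  have e3 : g ({none} ∪ (lineA (-1) ∪ lineA 1).image some) = 5 := by
    rw [hstep (lineA (-1)) _ Finset.subset_union_left hA1, gext,
      rank_of_big (fun hX => by have h5 := CH_card hX; revert h5; decide) (by decide)]
  -- g {none} = 1
  have hNz : g {none} = 1 := by
    simp only [← Finset.image_union] at hmod
    rw [Finset.union_comm ((lineA (-1)).image some) {none},
      Finset.union_comm ((lineA 1).image some) {none},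
      Finset.union_comm ((lineA (-1) ∪ lineA 1).image some) {none}] at hmod
    linarith
  -- circuit-hyperplane values with z
  have eCH1 : ∀ j : ZMod 3, g ({none} ∪ (lineA (-1) ∪ lineB j).image some) = 4 := by
    intro j
    rw [hstep (lineA (-1)) _ Finset.subset_union_left hA1, gext, rank_of_CH (CH_mem (-1) j
      (by intro h; rw [Prod.mk.injEq] at h; exact absurd h.1 (by decide)))]
  have eCH2 : ∀ j : ZMod 3, g ({none} ∪ (lineA 1 ∪ lineB j).image some) = 4 := by
    intro j
    rw [hstep (lineA 1) _ Finset.subset_union_left hA2, gext, rank_of_CH (CH_mem 1 j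
      (by intro h; rw [Prod.mk.injEq] at h; exact absurd h.1 (by decide)))]
  -- vertical lines
  have eBv : ∀ j : ZMod 3, g ((lineB j).image some) = 3 := by
    intro j
    rw [gext, rank_of_card ((by decide : ∀ j : ZMod 3, lineB j ∉ tttCH) j)
      ((by decide : ∀ j : ZMod 3, (lineB j).card = 3) j) (by norm_num)]
    norm_num
  have eB : ∀ j : ZMod 3, g ({none} ∪ (lineB j).image some) = g ((lineB j).image some) := by
    intro j
    have hp := hpair (lineA (-1) ∪ lineB j) (lineA 1 ∪ lineB j)
    rw [(by decide : ∀ j : ZMod 3,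
      (lineA (-1) ∪ lineB j) ∩ (lineA 1 ∪ lineB j) = lineB j) j] at hp
    have h6 : 6 ≤ ((lineA (-1) ∪ lineB j) ∪ (lineA 1 ∪ lineB j)).card :=
      le_trans (le_of_eq (by decide : (lineA (-1) ∪ lineA 1).card = 6).symm)
        (Finset.card_le_card
          (Finset.union_subset_union Finset.subset_union_left Finset.subset_union_left))
    rw [rank_of_big (fun hX => by have h5 := CH_card hX; omega) (by omega),
      eCH1 j, eCH2 j] at hp
    refine le_antisymm ?_ (mono Finset.subset_union_right)
    rw [eBv j]; linarith
  -- the A₀ ∪ B_j circuit-hyperplanes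
  have eCH3 : ∀ j : ZMod 3, j ≠ 0 → g ({none} ∪ (lineA 0 ∪ lineB j).image some) = 4 := by
    intro j hj
    rw [hstep (lineB j) _ Finset.subset_union_right (eB j), gext, rank_of_CH (CH_mem 0 j
      (by intro h; rw [Prod.mk.injEq] at h; exact absurd h.2 hj))]
  -- the line A₀
  have eA0 : g ({none} ∪ (lineA 0).image some) = 3 := by
    have hp := hpair (lineA 0 ∪ lineB (-1)) (lineA 0 ∪ lineB 1)
    rw [(by decide : (lineA 0 ∪ lineB (-1)) ∩ (lineA 0 ∪ lineB 1) = lineA 0)] at hp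
    rw [rank_of_big (by decide) (by decide), eCH3 (-1) (by decide), eCH3 1 (by decide)] at hp
    have hlow : g ((lineA 0).image some) ≤ g ({none} ∪ (lineA 0).image some) :=
      mono Finset.subset_union_right
    rw [gext, rank_of_card (by decide) (by decide : (lineA 0).card = 3) (by norm_num)] at hlow
    push_cast at hlow
    linarith
  -- the point (0,0) together with z has rank 1
  have ePt : g ({none} ∪ ({((0 : ZMod 3), (0 : ZMod 3))} : Finset Pt).image some) = 1 := by
    have hp := hpair (lineA 0) (lineB 0)
    rw [(by decide : lineA 0 ∩ lineB 0 = ({((0 : ZMod 3), (0 : ZMod 3))} : Finset Pt))] at hp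
    rw [rank_of_big (by decide) (by decide), eA0, eB 0, eBv 0] at hp
    have hlow : g {none} ≤ g ({none} ∪ ({((0 : ZMod 3), (0 : ZMod 3))} : Finset Pt).image some) :=
      mono Finset.subset_union_left
    rw [hNz] at hlow
    linarith
  -- final contradiction
  have hp := hpair (lineA (-1)) ({((0 : ZMod 3), (0 : ZMod 3))} : Finset Pt)
  rw [(by decide : lineA (-1) ∩ ({((0 : ZMod 3), (0 : ZMod 3))} : Finset Pt) = ∅),
    Finset.image_empty, Finset.union_empty, hNz, e1, ePt,
    rank_of_card (by decide)
      (by decide : (lineA (-1) ∪ ({((0 : ZMod 3), (0 : ZMod 3))} : Finset Pt)).card = 4)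
      (by norm_num)] at hp
  norm_num at hp
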